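/- Let A ∈ ℝ^{n×n} be symmetric with spectral decomposition having an orthonormal eigenbasis v₁,...,vₙ. Then (A, b) is controllable if and only if A has n distinct eigenvalues and ⟨vᵢ, b⟩ ≠ 0 for every i. -/

import Mathlib

/-- Controllability matrix: columns are `A^j b` for `j = 0, …, n-1`. -/
def ctrbMat {n : ℕ} (A : Matrix (Fin n) (Fin n) ℝ) (b : Fin n → ℝ) :
    Matrix (Fin n) (Fin n) ℝ :=
  Matrix.of fun i j => (A ^ (j : ℕ)).mulVec b i

open Matrix in
theorem stmt_10 (n : ℕ) (A : Matrix (Fin n) (Fin n) ℝ) (hA : A.IsSymm)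
    (v : Fin n → Fin n → ℝ) (μ : Fin n → ℝ)
    (hortho : ∀ i j, v i ⬝ᵥ v j = if i = j then 1 else 0)
    (heig : ∀ i, A.mulVec (v i) = μ i • v i) (b : Fin n → ℝ) :
    IsUnit (ctrbMat A b) ↔ Function.Injective μ ∧ ∀ i, v i ⬝ᵥ b ≠ 0 := by
  classical
  set c : Fin n → ℝ := fun i => v i ⬝ᵥ b with hc
  set V : Matrix (Fin n) (Fin n) ℝ := (Matrix.of v)ᵀ with hV
  have hVtV : Vᵀ * V = 1 := by
    ext i j
    simpa [hV, Matrix.mul_apply, Matrix.one_apply, dotProduct] using hortho i j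
  have hVVt : V * Vᵀ = 1 := mul_eq_one_comm.mp hVtV
  have hdV : IsUnit V.det := IsUnit.of_mul_eq_one Vᵀ.det
    (by rw [← Matrix.det_mul, hVVt, Matrix.det_one])
  have hVunit : IsUnit V := (Matrix.isUnit_iff_isUnit_det V).mpr hdV
  -- b expands in the eigenbasis
  have hb : ∀ m, b m = ∑ i, c i * v i m := by
    intro m
    have h1 : V.mulVec (Vᵀ.mulVec b) = b := by
      rw [Matrix.mulVec_mulVec, hVVt, Matrix.one_mulVec]
    have h2 : (V.mulVec (Vᵀ.mulVec b)) m = ∑ i, c i * v i m := by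
      simp [Matrix.mulVec, dotProduct, hV, hc, Finset.mul_sum, Finset.sum_mul]
      apply Finset.sum_congr rfl
      intro i _
      apply Finset.sum_congr rfl
      intro k _
      ring
    rw [← h2, h1]
  -- eigenvalue powers
  have hpow : ∀ (j : ℕ) (i : Fin n), (A ^ j).mulVec (v i) = (μ i ^ j) • v i := by
    intro j i
    induction j with
    | zero => simp
    | succ j ih =>
      rw [pow_succ', ← Matrix.mulVec_mulVec, ih, Matrix.mulVec_smul, heig i,
        smul_smul, pow_succ', mul_comm]
  set N : Matrix (Fin n) (Fin n) ℝ :=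
    Matrix.of fun i j => c i * μ i ^ (j : ℕ) with hN
  have hfact : ctrbMat A b = V * N := by
    ext k j
    have lhs : ctrbMat A b k j = ∑ i, c i * (μ i ^ (j : ℕ) * v i k) := by
      simp only [ctrbMat, Matrix.of_apply, Matrix.mulVec, dotProduct]
      calc ∑ m, (A ^ (j : ℕ)) k m * b m
          = ∑ m, (A ^ (j : ℕ)) k m * ∑ i, c i * v i m := by
            simp_rw [← hb]
        _ = ∑ m, ∑ i, c i * ((A ^ (j : ℕ)) k m * v i m) := by
            apply Finset.sum_congr rfl; intro m _
            rw [Finset.mul_sum]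
            apply Finset.sum_congr rfl; intro i _; ring
        _ = ∑ i, c i * ∑ m, (A ^ (j : ℕ)) k m * v i m := by
            rw [Finset.sum_comm]
            simp [Finset.mul_sum]
        _ = ∑ i, c i * (μ i ^ (j : ℕ) * v i k) := by
            apply Finset.sum_congr rfl; intro i _
            have := congrFun (hpow (j : ℕ) i) k
            simp only [Matrix.mulVec, dotProduct, Pi.smul_apply,
              smul_eq_mul] at this
            rw [this]
    rw [lhs]
    simp only [Matrix.mul_apply, hV, hN, Matrix.transpose_apply, Matrix.of_apply]
    apply Finset.sum_congr rfl; intro i _; ring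
  have hNdiag : N = Matrix.diagonal c * Matrix.vandermonde μ := by
    ext i j
    simp [hN, Matrix.mul_apply, Matrix.diagonal, Matrix.vandermonde,
      Finset.sum_ite_eq, Finset.mem_univ]
  have hmain : IsUnit (ctrbMat A b) ↔ IsUnit N := by
    rw [hfact, Matrix.isUnit_iff_isUnit_det, Matrix.det_mul,
      Matrix.isUnit_iff_isUnit_det N]
    constructor
    · intro h
      exact (IsUnit.mul_iff.mp h).2
    · intro h
      exact hdV.mul h
  rw [hmain, Matrix.isUnit_iff_isUnit_det, isUnit_iff_ne_zero, hNdiag,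
    Matrix.det_mul, Matrix.det_diagonal, Matrix.det_vandermonde]
  rw [mul_ne_zero_iff, Finset.prod_ne_zero_iff, Finset.prod_ne_zero_iff]
  constructor
  · rintro ⟨h1, h2⟩
    refine ⟨?_, fun i => h1 i (Finset.mem_univ i)⟩
    intro i j hij
    rcases lt_trichotomy i j with h | h | h
    · have := h2 i (Finset.mem_univ i)
      have := Finset.prod_ne_zero_iff.mp this j (Finset.mem_Ioi.mpr h)
      exact absurd (by rw [hij]; ring) this
    · exact h
    · have := h2 j (Finset.mem_univ j)
      have := Finset.prod_ne_zero_iff.mp this i (Finset.mem_Ioi.mpr h)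
      exact absurd (by rw [hij]; ring) this
  · rintro ⟨hinj, hne⟩
    refine ⟨fun i _ => hne i, fun i _ => ?_⟩
    rw [Finset.prod_ne_zero_iff]
    intro j hj
    have : j ≠ i := (Finset.mem_Ioi.mp hj).ne'
    exact sub_ne_zero_of_ne (fun h => this (hinj h))
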